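/- Let σ be a permutation of a finite set of size n = s + t that factors as σ = σ₁σ₂ where σ₁ and σ₂ have disjoint supports. Suppose σ₁ is a product of two t-cycles each supported in the support region of σ₁ (a set of size t), and σ₂ is a product of two s-cycles each supported in a disjoint set of size s. Then σ is a product of two n-cycles. -/
import Mathlib

open Equiv Equiv.Perm Finset

lemma join_cycles {α : Type*} [DecidableEq α] [Fintype α]
    (f g : Perm α) (a b : α)
    (hf : f.IsCycle) (hg : g.IsCycle)
    (hd : Disjoint f.support g.support)
    (ha : a ∈ f.support) (hb : b ∈ g.support) :
    (Equiv.swap a b * f * g).IsCycle ∧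
      (Equiv.swap a b * f * g).support = f.support ∪ g.support := by
  set h : Perm α := Equiv.swap a b * f * g with hh
  have hab : a ≠ b := fun e => (Finset.disjoint_left.1 hd ha) (e ▸ hb)
  have hfixg : ∀ x ∈ f.support, g x = x := fun x hx => by
    have : x ∉ g.support := Finset.disjoint_left.1 hd hx
    simpa [Equiv.Perm.mem_support, not_not] using this
  have hfixf : ∀ x ∈ g.support, f x = x := fun x hx => by
    have : x ∉ f.support := Finset.disjoint_right.1 hd hx
    simpa [Equiv.Perm.mem_support, not_not] using this
  have heF : ∀ x ∈ f.support, h x = Equiv.swap a b (f x) := fun x hx => by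
    simp [hh, Equiv.Perm.mul_apply, hfixg x hx]
  have heG : ∀ x ∈ g.support, h x = Equiv.swap a b (g x) := fun x hx => by
    have : g x ∈ g.support := Equiv.Perm.apply_mem_support.2 hx
    simp [hh, Equiv.Perm.mul_apply, hfixf _ this]
  have hfa : f a ≠ a := Equiv.Perm.mem_support.1 ha
  have hgb : g b ≠ b := Equiv.Perm.mem_support.1 hb
  -- step along f-orbit
  have stepF : ∀ x ∈ f.support, h.SameCycle a x → h.SameCycle a (f x) := by
    intro x hx hsc
    by_cases hfxa : f x = a
    · rw [hfxa]
    · have hfxb : f x ≠ b := fun e =>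
        (Finset.disjoint_left.1 hd (Equiv.Perm.apply_mem_support.2 hx)) (e ▸ hb)
      have hhx : h x = f x := by
        rw [heF x hx, Equiv.swap_apply_of_ne_of_ne hfxa hfxb]
      exact hhx ▸ hsc.trans ⟨1, by simp⟩
  have orbitF : ∀ k : ℕ, h.SameCycle a ((f ^ k) a) := by
    intro k
    induction k with
    | zero => exact Equiv.Perm.SameCycle.refl _ _
    | succ k ih =>
      have hmem : (f ^ k) a ∈ f.support := Equiv.Perm.pow_apply_mem_support.2 ha
      have := stepF _ hmem ih
      rwa [pow_succ', Equiv.Perm.mul_apply]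
  have allF : ∀ y ∈ f.support, h.SameCycle a y := by
    intro y hy
    obtain ⟨k, hk⟩ := hf.exists_pow_eq hfa (Equiv.Perm.mem_support.1 hy)
    exact hk ▸ orbitF k
  -- b is in the cycle of a
  have hscb : h.SameCycle a b := by
    have hmem : f⁻¹ a ∈ f.support := by
      rw [← Equiv.Perm.apply_mem_support (f := f)]
      simpa using ha
    have hval : h (f⁻¹ a) = b := by
      rw [heF _ hmem]
      simp [Equiv.swap_apply_left]
    exact hval ▸ (allF _ hmem).trans ⟨1, by simp⟩
  -- step along g-orbit
  have stepG : ∀ x ∈ g.support, h.SameCycle a x → h.SameCycle a (g x) := by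
    intro x hx hsc
    by_cases hgxb : g x = b
    · rw [hgxb]; exact hscb
    · have hgxa : g x ≠ a := fun e =>
        (Finset.disjoint_right.1 hd (Equiv.Perm.apply_mem_support.2 hx)) (e ▸ ha)
      have hhx : h x = g x := by
        rw [heG x hx, Equiv.swap_apply_of_ne_of_ne hgxa hgxb]
      exact hhx ▸ hsc.trans ⟨1, by simp⟩
  have orbitG : ∀ k : ℕ, h.SameCycle a ((g ^ k) b) := by
    intro k
    induction k with
    | zero => exact hscb
    | succ k ih =>
      have hmem : (g ^ k) b ∈ g.support := Equiv.Perm.pow_apply_mem_support.2 hb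
      have := stepG _ hmem ih
      rwa [pow_succ', Equiv.Perm.mul_apply]
  have allG : ∀ y ∈ g.support, h.SameCycle a y := by
    intro y hy
    obtain ⟨k, hk⟩ := hg.exists_pow_eq hgb (Equiv.Perm.mem_support.1 hy)
    exact hk ▸ orbitG k
  -- support of h
  have hsupsub : h.support ⊆ f.support ∪ g.support := by
    intro y hy
    have h1 : h.support ⊆ (Equiv.swap a b * f).support ∪ g.support :=
      Equiv.Perm.support_mul_le _ _
    have h2 : (Equiv.swap a b * f).support ⊆ (Equiv.swap a b).support ∪ f.support :=
      Equiv.Perm.support_mul_le _ _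
    have h3 : (Equiv.swap a b).support ⊆ f.support ∪ g.support := by
      rw [Equiv.Perm.support_swap hab]
      intro z hz
      simp only [Finset.mem_insert, Finset.mem_singleton] at hz
      rcases hz with rfl | rfl
      · exact Finset.mem_union_left _ ha
      · exact Finset.mem_union_right _ hb
    have := h1 hy
    rcases Finset.mem_union.1 this with h' | h'
    · rcases Finset.mem_union.1 (h2 h') with h'' | h''
      · exact h3 h''
      · exact Finset.mem_union_left _ h''
    · exact Finset.mem_union_right _ h'
  have hsupsup : f.support ∪ g.support ⊆ h.support := by
    intro y hy
    rcases Finset.mem_union.1 hy with hy' | hy'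
    · rw [Equiv.Perm.mem_support, heF y hy']
      by_cases hfya : f y = a
      · rw [hfya, Equiv.swap_apply_left]
        exact fun e => (Finset.disjoint_left.1 hd hy') (e ▸ hb)
      · have hfyb : f y ≠ b := fun e =>
          (Finset.disjoint_left.1 hd (Equiv.Perm.apply_mem_support.2 hy')) (e ▸ hb)
        rw [Equiv.swap_apply_of_ne_of_ne hfya hfyb]
        exact Equiv.Perm.mem_support.1 hy'
    · rw [Equiv.Perm.mem_support, heG y hy']
      by_cases hgyb : g y = b
      · rw [hgyb, Equiv.swap_apply_right]
        exact fun e => (Finset.disjoint_right.1 hd hy') (e ▸ ha)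
      · have hgya : g y ≠ a := fun e =>
          (Finset.disjoint_right.1 hd (Equiv.Perm.apply_mem_support.2 hy')) (e ▸ ha)
        rw [Equiv.swap_apply_of_ne_of_ne hgya hgyb]
        exact Equiv.Perm.mem_support.1 hy'
  have hsup : h.support = f.support ∪ g.support :=
    le_antisymm hsupsub hsupsup
  refine ⟨⟨a, ?_, ?_⟩, hsup⟩
  · have : a ∈ h.support := hsupsup (Finset.mem_union_left _ ha)
    exact Equiv.Perm.mem_support.1 this
  · intro y hy
    have : y ∈ h.support := Equiv.Perm.mem_support.2 hy
    rcases Finset.mem_union.1 (hsupsub this) with hy' | hy'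
    · exact allF y hy'
    · exact allG y hy'

theorem stmt_2 (n s t : ℕ) (hn : n = s + t)
    (σ σ₁ σ₂ c₁ c₂ c₃ c₄ : Equiv.Perm (Fin n))
    (A B : Finset (Fin n)) (hA : A.card = t) (hB : B.card = s)
    (hAB : Disjoint A B)
    (hσ : σ = σ₁ * σ₂)
    (h₁ : σ₁ = c₁ * c₂) (h₂ : σ₂ = c₃ * c₄)
    (hc₁ : c₁.IsCycle) (hc₁A : c₁.support = A)
    (hc₂ : c₂.IsCycle) (hc₂A : c₂.support = A)
    (hc₃ : c₃.IsCycle) (hc₃B : c₃.support = B)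
    (hc₄ : c₄.IsCycle) (hc₄B : c₄.support = B) :
    ∃ ρ₁ ρ₂ : Equiv.Perm (Fin n),
      ρ₁.IsCycle ∧ ρ₁.support.card = n ∧
      ρ₂.IsCycle ∧ ρ₂.support.card = n ∧ σ = ρ₁ * ρ₂ := by
  -- pick base points
  obtain ⟨a, hca, -⟩ := id hc₁
  have ha : a ∈ A := hc₁A ▸ Equiv.Perm.mem_support.2 hca
  obtain ⟨b, hcb, -⟩ := id hc₃
  have hb : b ∈ B := hc₃B ▸ Equiv.Perm.mem_support.2 hcb
  have hcardAB : (A ∪ B).card = n := by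
    rw [Finset.card_union_of_disjoint hAB, hA, hB, hn, Nat.add_comm]
  -- ρ₂ := swap a b * c₂ * c₄
  have hd₂ : Disjoint c₂.support c₄.support := by rw [hc₂A, hc₄B]; exact hAB
  obtain ⟨hρ₂cyc, hρ₂sup⟩ := join_cycles c₂ c₄ a b hc₂ hc₄ hd₂
    (hc₂A ▸ ha) (hc₄B ▸ hb)
  rw [hc₂A, hc₄B] at hρ₂sup
  -- ρ₁ := c₁ * c₃ * swap a b ; work with its inverse
  have hd₁ : Disjoint c₃⁻¹.support c₁⁻¹.support := by
    rw [Equiv.Perm.support_inv, Equiv.Perm.support_inv, hc₁A, hc₃B]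
    exact hAB.symm
  obtain ⟨hicyc, hisup⟩ := join_cycles c₃⁻¹ c₁⁻¹ b a hc₃.inv hc₁.inv hd₁
    (by rw [Equiv.Perm.support_inv, hc₃B]; exact hb)
    (by rw [Equiv.Perm.support_inv, hc₁A]; exact ha)
  rw [Equiv.Perm.support_inv, Equiv.Perm.support_inv, hc₁A, hc₃B] at hisup
  have hinv : (c₁ * c₃ * Equiv.swap a b)⁻¹ = Equiv.swap b a * c₃⁻¹ * c₁⁻¹ := by
    rw [mul_inv_rev, mul_inv_rev, Equiv.swap_inv, Equiv.swap_comm, mul_assoc]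
  refine ⟨c₁ * c₃ * Equiv.swap a b, Equiv.swap a b * c₂ * c₄, ?_, ?_, hρ₂cyc, ?_, ?_⟩
  · have := hicyc.inv
    rwa [← hinv, inv_inv] at this
  · rw [← Equiv.Perm.support_inv, hinv, hisup, Finset.union_comm]
    exact hcardAB
  · rw [hρ₂sup]; exact hcardAB
  · have hcomm : c₂ * c₃ = c₃ * c₂ := by
      have : Equiv.Perm.Disjoint c₂ c₃ := by
        rw [Equiv.Perm.disjoint_iff_disjoint_support, hc₂A, hc₃B]
        exact hAB
      exact this.commute.eq
    rw [hσ, h₁, h₂]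
    calc c₁ * c₂ * (c₃ * c₄) = c₁ * (c₂ * c₃) * c₄ := by group
      _ = c₁ * (c₃ * c₂) * c₄ := by rw [hcomm]
      _ = c₁ * c₃ * Equiv.swap a b * (Equiv.swap a b * c₂ * c₄) := by
          rw [show c₁ * c₃ * Equiv.swap a b * (Equiv.swap a b * c₂ * c₄)
              = c₁ * c₃ * (Equiv.swap a b * Equiv.swap a b) * c₂ * c₄ by group,
            Equiv.swap_mul_self]
          group
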